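/- arXiv:1012.0975 — 3 statements merged into one kernel-verified Lean document; each statement's English description precedes it below -/
import Mathlib

section
/- Let $K$ be a real symmetric $p\times p$ matrix, let $\alpha>0$, and define the matrix Newton iteration $X_0=\sqrt{\alpha}\,I$ and $X_{k+1}=\tfrac{1}{2}\big(X_k + X_k^{-1}(K^2+\alpha I)\big)$. Then for every $k\ge 0$ the matrix $X_k$ is symmetric, positive definite (hence invertible, so the iteration is well defined), and commutes with $K$. -/
private lemma posDef_smul_aux {n : ℕ} {M : Matrix (Fin n) (Fin n) ℝ} (hM : M.PosDef)
    {c : ℝ} (hc : 0 < c) : (c • M).PosDef := by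
  refine ⟨?_, fun x hx => ?_⟩
  · unfold Matrix.IsHermitian
    rw [Matrix.conjTranspose_smul, hM.isHermitian]
    simp
  · exact (hM.smul hc).2 hx

/-- The matrix Newton iteration `X 0 = √α • I`,
`X (k+1) = (1/2) • (X k + (X k)⁻¹ * (K ^ 2 + α • I))`, for `K` real symmetric and
`α > 0`, produces matrices that are symmetric positive definite (hence invertible,
so the iteration is well defined) and commute with `K`. -/
theorem matrix_newton_iter_posDef_commute (p : ℕ) (K : Matrix (Fin p) (Fin p) ℝ)
    (hK : K.IsHermitian) (α : ℝ) (hα : 0 < α) (X : ℕ → Matrix (Fin p) (Fin p) ℝ)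
    (hX0 : X 0 = Real.sqrt α • (1 : Matrix (Fin p) (Fin p) ℝ))
    (hXs : ∀ k, X (k + 1) =
      (1 / 2 : ℝ) • (X k + (X k)⁻¹ * (K ^ 2 + α • (1 : Matrix (Fin p) (Fin p) ℝ)))) :
    ∀ k, (X k).PosDef ∧ IsUnit (X k) ∧ X k * K = K * X k := by
  intro k
  induction k with
  | zero =>
    have hs : 0 < Real.sqrt α := Real.sqrt_pos.mpr hα
    have hpd : (X 0).PosDef := by
      rw [hX0]; exact posDef_smul_aux Matrix.PosDef.one hs
    refine ⟨hpd, hpd.isUnit, ?_⟩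
    rw [hX0, Matrix.smul_mul, Matrix.mul_smul, one_mul, mul_one]
  | succ k ih =>
    obtain ⟨hpd, hu, hcomm⟩ := ih
    set A := X k with hA
    have hdet : IsUnit A.det := (Matrix.isUnit_iff_isUnit_det A).mp hu
    have hAA : A * A⁻¹ = 1 := Matrix.mul_nonsing_inv A hdet
    have hA'A : A⁻¹ * A = 1 := Matrix.nonsing_inv_mul A hdet
    have hinvcomm : A⁻¹ * K = K * A⁻¹ := by
      calc A⁻¹ * K = A⁻¹ * K * (A * A⁻¹) := by rw [hAA, mul_one]
        _ = A⁻¹ * (K * A) * A⁻¹ := by simp only [mul_assoc]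
        _ = A⁻¹ * (A * K) * A⁻¹ := by rw [hcomm]
        _ = (A⁻¹ * A) * K * A⁻¹ := by simp only [mul_assoc]
        _ = K * A⁻¹ := by rw [hA'A, one_mul]
    have hkey : A⁻¹ * (K ^ 2 + α • (1 : Matrix (Fin p) (Fin p) ℝ))
        = K.conjTranspose * A⁻¹ * K + α • A⁻¹ := by
      rw [mul_add, hK]
      congr 1
      · rw [sq, ← mul_assoc, hinvcomm]
      · rw [Matrix.mul_smul, mul_one]
    have hpdinv : (A⁻¹).PosDef := hpd.inv
    have h1 : (K.conjTranspose * A⁻¹ * K).PosSemidef := hpdinv.posSemidef.conjTranspose_mul_mul_same K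
    have h2 : (α • A⁻¹).PosDef := posDef_smul_aux hpdinv hα
    have hsum : (A + (K.conjTranspose * A⁻¹ * K + α • A⁻¹)).PosDef :=
      hpd.add (Matrix.PosDef.posSemidef_add h1 h2)
    have hpd' : (X (k + 1)).PosDef := by
      rw [hXs k, hkey]
      exact posDef_smul_aux hsum (by norm_num)
    have hMK : (K ^ 2 + α • (1 : Matrix (Fin p) (Fin p) ℝ)) * K
        = K * (K ^ 2 + α • (1 : Matrix (Fin p) (Fin p) ℝ)) := by
      rw [add_mul, mul_add, Matrix.smul_mul, Matrix.mul_smul, one_mul, mul_one,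
        ← pow_succ, ← pow_succ']
    refine ⟨hpd', hpd'.isUnit, ?_⟩
    rw [hXs k, Matrix.smul_mul, Matrix.mul_smul]
    congr 1
    rw [add_mul, hcomm, mul_assoc, hMK, ← mul_assoc, hinvcomm, mul_assoc, ← mul_add]
end

section
/- Let $K$ be a real symmetric $p\times p$ matrix, $\alpha>0$, and define $X_0=\sqrt{\alpha}\,I$, $X_{k+1}=\tfrac{1}{2}\big(X_k + X_k^{-1}(K^2+\alpha I)\big)$. Then for every $k\ge 1$, the matrix $X_k-\sqrt{K^2+\alpha I}$ is positive semidefinite. -/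
namespace Matrix.PosSemidef

open scoped ComplexOrder

/-- The positive semidefinite square root of a positive semidefinite matrix
(the definition removed from Mathlib, restored with its old meaning). -/
noncomputable def sqrt {n : Type*} [Fintype n] [DecidableEq n] {𝕜 : Type*} [RCLike 𝕜]
    {A : Matrix n n 𝕜} (hA : A.PosSemidef) : Matrix n n 𝕜 :=
  hA.1.eigenvectorUnitary.1 * Matrix.diagonal ((↑) ∘ (√·) ∘ hA.1.eigenvalues) *
    (star hA.1.eigenvectorUnitary : Matrix n n 𝕜)

theorem posSemidef_sqrt {n : Type*} [Fintype n] [DecidableEq n]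
    {A : Matrix n n ℝ} (hA : A.PosSemidef) : hA.sqrt.PosSemidef := by
  unfold sqrt
  have hd : (Matrix.diagonal (RCLike.ofReal ∘ (√·) ∘ hA.1.eigenvalues : n → ℝ)).PosSemidef :=
    Matrix.PosSemidef.diagonal (fun i => by simp [Real.sqrt_nonneg])
  have := hd.mul_mul_conjTranspose_same (hA.1.eigenvectorUnitary.1)
  rwa [Matrix.star_eq_conjTranspose]

theorem sqrt_mul_self {n : Type*} [Fintype n] [DecidableEq n]
    {A : Matrix n n ℝ} (hA : A.PosSemidef) : hA.sqrt * hA.sqrt = A := by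
  unfold sqrt
  have hU : (star hA.1.eigenvectorUnitary : Matrix n n ℝ) * (hA.1.eigenvectorUnitary : Matrix n n ℝ)
      = 1 := Unitary.coe_star_mul_self _
  have hD : Matrix.diagonal (RCLike.ofReal ∘ (√·) ∘ hA.1.eigenvalues : n → ℝ) *
      Matrix.diagonal (RCLike.ofReal ∘ (√·) ∘ hA.1.eigenvalues : n → ℝ) =
      Matrix.diagonal (RCLike.ofReal ∘ hA.1.eigenvalues : n → ℝ) := by
    rw [Matrix.diagonal_mul_diagonal]; congr 1; funext i
    simp [Real.mul_self_sqrt (hA.eigenvalues_nonneg i)]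
  conv_rhs => rw [hA.1.spectral_theorem, Unitary.conjStarAlgAut_apply, ← hD]
  simp only [Matrix.mul_assoc]
  rw [← Matrix.mul_assoc (star hA.1.eigenvectorUnitary : Matrix n n ℝ), hU, Matrix.one_mul]

end Matrix.PosSemidef

open Matrix

private lemma smul_posSemidef' {n : Type*} [Fintype n] {A : Matrix n n ℝ}
    (hA : A.PosSemidef) {c : ℝ} (hc : 0 ≤ c) : (c • A).PosSemidef := by
  exact hA.smul hc

private lemma smul_posDef' {n : Type*} [Fintype n] {A : Matrix n n ℝ}
    (hA : A.PosDef) {c : ℝ} (hc : 0 < c) : (c • A).PosDef := by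
  exact hA.smul hc

/-- From the first step on, the matrix Newton iterates dominate the true square
root `√(K ^ 2 + α • I)` in the Loewner order, i.e. `X k - √(K ^ 2 + α • I)` is
positive semidefinite for `k ≥ 1`.  The hypothesis `hP` is automatically
satisfied since `K` is symmetric and `α > 0`. -/
theorem matrix_newton_iter_ge_sqrt (p : ℕ) (K : Matrix (Fin p) (Fin p) ℝ)
    (hK : K.IsHermitian) (α : ℝ) (hα : 0 < α)
    (hP : (K ^ 2 + α • (1 : Matrix (Fin p) (Fin p) ℝ)).PosSemidef)
    (X : ℕ → Matrix (Fin p) (Fin p) ℝ)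
    (hX0 : X 0 = Real.sqrt α • (1 : Matrix (Fin p) (Fin p) ℝ))
    (hXs : ∀ k, X (k + 1) =
      (1 / 2 : ℝ) • (X k + (X k)⁻¹ * (K ^ 2 + α • (1 : Matrix (Fin p) (Fin p) ℝ)))) :
    ∀ k, 1 ≤ k → (X k - hP.sqrt).PosSemidef := by
  set P : Matrix (Fin p) (Fin p) ℝ := K ^ 2 + α • 1 with hPdef
  set S : Matrix (Fin p) (Fin p) ℝ := hP.sqrt with hSdef
  have hS : S.PosSemidef := hP.posSemidef_sqrt
  have hSS : S * S = P := hP.sqrt_mul_self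
  -- the invariant: each iterate is positive definite and commutes with `S`
  have main : ∀ k, (X k).PosDef ∧ X k * S = S * X k := by
    intro k
    induction k with
    | zero =>
      rw [hX0]
      refine ⟨smul_posDef' Matrix.PosDef.one (Real.sqrt_pos.2 hα), ?_⟩
      rw [Matrix.smul_mul, Matrix.mul_smul, Matrix.one_mul, Matrix.mul_one]
    | succ k ih =>
      obtain ⟨hpd, hcomm⟩ := ih
      set A : Matrix (Fin p) (Fin p) ℝ := X k with hAdef
      have hdet : IsUnit A.det := hpd.det_pos.ne'.isUnit
      have hA1 : A⁻¹ * A = 1 := Matrix.nonsing_inv_mul A hdet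
      have hAA1 : A * A⁻¹ = 1 := Matrix.mul_nonsing_inv A hdet
      have hcomm' : A⁻¹ * S = S * A⁻¹ := by
        calc A⁻¹ * S = A⁻¹ * S * (A * A⁻¹) := by rw [hAA1, Matrix.mul_one]
          _ = A⁻¹ * (S * A) * A⁻¹ := by simp only [Matrix.mul_assoc]
          _ = A⁻¹ * (A * S) * A⁻¹ := by rw [← hcomm]
          _ = (A⁻¹ * A) * S * A⁻¹ := by simp only [Matrix.mul_assoc]
          _ = S * A⁻¹ := by rw [hA1, Matrix.one_mul]
      have hXk1 : X (k + 1) = (1 / 2 : ℝ) • (A + A⁻¹ * (S * S)) := by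
        rw [hXs k, hSS]
      have hprod : A⁻¹ * (S * S) = S * A⁻¹ * Sᴴ := by
        rw [hS.isHermitian.eq, ← Matrix.mul_assoc, hcomm']
      constructor
      · rw [hXk1]
        refine smul_posDef' ?_ (by norm_num)
        refine hpd.add_posSemidef ?_
        rw [hprod]
        exact hpd.inv.posSemidef.mul_mul_conjTranspose_same S
      · rw [hXk1, Matrix.smul_mul, Matrix.mul_smul]
        congr 1
        rw [Matrix.add_mul, Matrix.mul_add, hcomm]
        congr 1
        calc A⁻¹ * (S * S) * S = A⁻¹ * S * (S * S) := by simp only [Matrix.mul_assoc]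
          _ = S * A⁻¹ * (S * S) := by rw [hcomm']
          _ = S * (A⁻¹ * (S * S)) := by simp only [Matrix.mul_assoc]
  -- the key algebraic identity and conclusion
  intro k hk
  obtain ⟨j, rfl⟩ := Nat.exists_eq_add_of_le hk
  rw [add_comm]
  obtain ⟨hpd, hcomm⟩ := main j
  set A : Matrix (Fin p) (Fin p) ℝ := X j with hAdef
  have hdet : IsUnit A.det := hpd.det_pos.ne'.isUnit
  have hA1 : A⁻¹ * A = 1 := Matrix.nonsing_inv_mul A hdet
  have hAA1 : A * A⁻¹ = 1 := Matrix.mul_nonsing_inv A hdet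
  have hcomm' : A⁻¹ * S = S * A⁻¹ := by
    calc A⁻¹ * S = A⁻¹ * S * (A * A⁻¹) := by rw [hAA1, Matrix.mul_one]
      _ = A⁻¹ * (S * A) * A⁻¹ := by simp only [Matrix.mul_assoc]
      _ = A⁻¹ * (A * S) * A⁻¹ := by rw [← hcomm]
      _ = (A⁻¹ * A) * S * A⁻¹ := by simp only [Matrix.mul_assoc]
      _ = S * A⁻¹ := by rw [hA1, Matrix.one_mul]
  have hMH : (A - S)ᴴ = A - S := by
    rw [Matrix.conjTranspose_sub, hpd.isHermitian.eq, hS.isHermitian.eq]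
  have expand : (A - S) * A⁻¹ * (A - S) = A + A⁻¹ * (S * S) - (S + S) := by
    have h1 : A⁻¹ * (A - S) = 1 - A⁻¹ * S := by rw [Matrix.mul_sub, hA1]
    have h2 : A * (A⁻¹ * S) = S := by rw [← Matrix.mul_assoc, hAA1, Matrix.one_mul]
    have h3 : S * (A⁻¹ * S) = A⁻¹ * (S * S) := by
      rw [← Matrix.mul_assoc, ← hcomm', Matrix.mul_assoc]
    rw [Matrix.mul_assoc, h1, Matrix.mul_sub, Matrix.sub_mul, Matrix.sub_mul,
      Matrix.mul_one, Matrix.mul_one, h2, h3]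
    abel
  have key : X (j + 1) - S = (1 / 2 : ℝ) • ((A - S) * A⁻¹ * (A - S)) := by
    have h4 : (1 / 2 : ℝ) • S + (1 / 2 : ℝ) • S = S := by
      rw [← add_smul]; norm_num
    rw [hXs j, ← hSS, expand, smul_sub, smul_add, smul_add, h4]
  rw [key]
  refine smul_posSemidef' ?_ (by norm_num)
  have := hpd.inv.posSemidef.mul_mul_conjTranspose_same (A - S)
  rwa [hMH] at this
end

section
/- Let $S$ be a real symmetric $p\times p$ matrix and $\lambda\ge 0$. Then the penalized negative log-likelihood $\Phi(\Theta) = -\log\det\Theta + \mathrm{tr}(S\Theta) + \lambda\sum_{i\ne j}|\Theta_{ij}|$ has at most one minimizer over the set of real symmetric positive definite $p\times p$ matrices. -/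
open Matrix

lemma posDef_smul {p : ℕ} {M : Matrix (Fin p) (Fin p) ℝ} (hM : M.PosDef) {c : ℝ} (hc : 0 < c) :
    (c • M).PosDef := by
  refine ⟨?_, fun x hx => ?_⟩
  · unfold Matrix.IsHermitian
    rw [conjTranspose_smul, hM.1.eq]
    simp
  · exact (hM.smul hc).2 hx

lemma posDef_conj {p : ℕ} {B P : Matrix (Fin p) (Fin p) ℝ} (hB : B.PosDef) (hP : IsUnit P) :
    (P * B * Pᴴ).PosDef := by
  have hPt : IsUnit Pᴴ := by
    rw [Matrix.isUnit_iff_isUnit_det] at hP ⊢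
    simpa using hP
  refine PosDef.of_dotProduct_mulVec_pos (Matrix.isHermitian_mul_mul_conjTranspose _ hB.1) fun x hx => ?_
  have hPx : Pᴴ *ᵥ x ≠ 0 := by
    intro h
    have hinj : Function.Injective (Pᴴ.mulVec) := Matrix.mulVec_injective_iff_isUnit.mpr hPt
    exact hx (hinj (by simpa using h))
  have := hB.dotProduct_mulVec_pos hPx
  simp only [star_trivial] at this ⊢
  convert this using 1
  rw [Matrix.mul_assoc, ← Matrix.mulVec_mulVec, Matrix.dotProduct_mulVec x]
  congr 1
  · rw [← Matrix.mulVec_transpose]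
    rfl
  · rw [← Matrix.mulVec_mulVec]

lemma half_log_le {μ : ℝ} (hμ : 0 < μ) : 2⁻¹ * Real.log μ ≤ Real.log (2⁻¹ * (1 + μ)) := by
  rw [show (2⁻¹ : ℝ) * Real.log μ = Real.log μ / 2 by ring, ← Real.log_sqrt hμ.le]
  apply Real.log_le_log (Real.sqrt_pos.mpr hμ)
  nlinarith [Real.sq_sqrt hμ.le, Real.sqrt_nonneg μ, sq_nonneg (Real.sqrt μ - 1)]

lemma half_log_lt {μ : ℝ} (hμ : 0 < μ) (hne : μ ≠ 1) :
    2⁻¹ * Real.log μ < Real.log (2⁻¹ * (1 + μ)) := by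
  rw [show (2⁻¹ : ℝ) * Real.log μ = Real.log μ / 2 by ring, ← Real.log_sqrt hμ.le]
  apply Real.log_lt_log (Real.sqrt_pos.mpr hμ)
  have h1 : Real.sqrt μ ≠ 1 := by
    intro h
    apply hne
    have := Real.sq_sqrt hμ.le
    rw [h] at this; simpa using this.symm
  nlinarith [Real.sq_sqrt hμ.le, Real.sqrt_nonneg μ, sq_pos_of_ne_zero (sub_ne_zero.mpr h1)]

lemma logdet_strict {p : ℕ} {A B : Matrix (Fin p) (Fin p) ℝ} (hA : A.PosDef) (hB : B.PosDef)
    (hAB : A ≠ B) :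
    2⁻¹ * Real.log A.det + 2⁻¹ * Real.log B.det < Real.log ((2⁻¹ : ℝ) • (A + B)).det := by
  classical
  set L := (open scoped MatrixOrder in CFC.sqrt A) with hLdef
  have hLL : L * L = A := by open scoped MatrixOrder in exact CFC.sqrt_mul_sqrt_self A hA.posSemidef.nonneg
  have hLh : L.IsHermitian := by open scoped MatrixOrder in exact (CFC.sqrt_nonneg A).posSemidef.1
  have hLdet : L.det * L.det = A.det := by rw [← Matrix.det_mul, hLL]
  have hLd0 : L.det ≠ 0 := by
    intro h
    have := hA.det_pos
    rw [← hLdet, h, mul_zero] at this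
    exact lt_irrefl _ this
  have hLu : IsUnit L := (Matrix.isUnit_iff_isUnit_det _).2 hLd0.isUnit
  have hLinv : IsUnit L⁻¹ := (Matrix.isUnit_nonsing_inv_iff).2 hLu
  set C := L⁻¹ * B * L⁻¹ with hCdef
  have hC : C.PosDef := by
    have h := posDef_conj hB hLinv
    rwa [hLh.inv.eq] at h
  have hLCL : L * C * L = B := by
    rw [hCdef]
    rw [show L * (L⁻¹ * B * L⁻¹) * L = (L * L⁻¹) * B * (L⁻¹ * L) by noncomm_ring]
    rw [Matrix.mul_nonsing_inv _ hLd0.isUnit, Matrix.nonsing_inv_mul _ hLd0.isUnit,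
      one_mul, mul_one]
  have hmid : (2⁻¹ : ℝ) • (A + B) = L * ((2⁻¹ : ℝ) • (1 + C)) * L := by
    rw [Matrix.mul_smul, Matrix.smul_mul]
    congr 1
    rw [mul_add, add_mul, mul_one, hLL, hLCL]
  set hCh := hC.1 with hChdef
  set μ := hCh.eigenvalues with hμdef
  set U : Matrix (Fin p) (Fin p) ℝ := (hCh.eigenvectorUnitary : Matrix (Fin p) (Fin p) ℝ)
    with hUdef
  have hUU : U * star U = 1 := (Matrix.mem_unitaryGroup_iff).mp hCh.eigenvectorUnitary.2
  have hspec : C = U * Matrix.diagonal μ * star U := by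
    have := hCh.spectral_theorem
    simpa using this
  have hμpos : ∀ i, 0 < μ i := fun i => hC.eigenvalues_pos i
  have hdetC : C.det = ∏ i, μ i := by
    have := hCh.det_eq_prod_eigenvalues
    simpa using this
  have hconjdet : ∀ Y : Matrix (Fin p) (Fin p) ℝ, (U * Y * star U).det = Y.det := by
    intro Y
    rw [Matrix.det_mul_right_comm, hUU, one_mul]
  have hIC : (2⁻¹ : ℝ) • (1 + C) = U * Matrix.diagonal (fun i => 2⁻¹ * (1 + μ i)) * star U := by
    have h1 : (1 : Matrix (Fin p) (Fin p) ℝ) = U * 1 * star U := by rw [mul_one, hUU]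
    rw [show Matrix.diagonal (fun i => 2⁻¹ * (1 + μ i))
        = (2⁻¹ : ℝ) • (1 + Matrix.diagonal μ) by
      rw [← Matrix.diagonal_one, Matrix.diagonal_add, ← Matrix.diagonal_smul]
      congr 1]
    rw [Matrix.mul_smul, Matrix.smul_mul]
    congr 1
    rw [mul_add, add_mul, mul_one, hUU, ← hspec]
  have hdetmid : ((2⁻¹ : ℝ) • (A + B)).det = A.det * ∏ i, (2⁻¹ * (1 + μ i)) := by
    rw [hmid, Matrix.det_mul, Matrix.det_mul, hIC, hconjdet, Matrix.det_diagonal, ← hLdet]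
    ring
  have hdetB : B.det = A.det * ∏ i, μ i := by
    rw [← hLCL, Matrix.det_mul, Matrix.det_mul, hdetC, ← hLdet]
    ring
  have hex : ∃ i, μ i ≠ 1 := by
    by_contra h
    push_neg at h
    apply hAB
    have hD : Matrix.diagonal μ = 1 := by
      rw [show μ = fun _ => (1:ℝ) from funext h, Matrix.diagonal_one]
    have hC1 : C = 1 := by rw [hspec, hD, mul_one, hUU]
    rw [← hLL, ← hLCL, hC1, mul_one]
  obtain ⟨i₀, hi₀⟩ := hex
  have hsum : ∑ i, 2⁻¹ * Real.log (μ i) < ∑ i, Real.log (2⁻¹ * (1 + μ i)) := by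
    apply Finset.sum_lt_sum
    · exact fun i _ => half_log_le (hμpos i)
    · exact ⟨i₀, Finset.mem_univ _, half_log_lt (hμpos i₀) hi₀⟩
  have hlogmid : Real.log ((2⁻¹ : ℝ) • (A + B)).det
      = Real.log A.det + ∑ i, Real.log (2⁻¹ * (1 + μ i)) := by
    have hpp : ∀ i ∈ Finset.univ, (0:ℝ) < 2⁻¹ * (1 + μ i) := fun i _ => by nlinarith [hμpos i]
    rw [hdetmid, Real.log_mul hA.det_pos.ne' (Finset.prod_pos hpp).ne']
    congr 1
    rw [Real.log_prod]
    exact fun i hi => (hpp i hi).ne'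
  have hlogB : Real.log B.det = Real.log A.det + ∑ i, Real.log (μ i) := by
    rw [hdetB, Real.log_mul hA.det_pos.ne' (Finset.prod_pos fun i _ => hμpos i).ne']
    congr 1
    rw [Real.log_prod]
    exact fun i _ => (hμpos i).ne'
  rw [hlogmid, hlogB]
  have h2 : (2⁻¹ : ℝ) * ∑ i, Real.log (μ i) = ∑ i, 2⁻¹ * Real.log (μ i) := Finset.mul_sum _ _ _
  nlinarith [hsum]


/-- The `ℓ₁`-penalized negative log-likelihood
`Φ(Θ) = -log det Θ + tr (S Θ) + λ ∑_{i ≠ j} |Θ i j|` has at most one minimizer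
over the set of real symmetric positive definite matrices. -/
theorem penalized_likelihood_at_most_one_minimizer (p : ℕ)
    (S : Matrix (Fin p) (Fin p) ℝ) (hS : S.IsHermitian) (lam : ℝ) (hlam : 0 ≤ lam)
    (Φ : Matrix (Fin p) (Fin p) ℝ → ℝ)
    (hΦ : ∀ Θ, Φ Θ = -Real.log Θ.det + (S * Θ).trace +
      lam * ∑ i, ∑ j, if i = j then 0 else |Θ i j|)
    (Θ₁ Θ₂ : Matrix (Fin p) (Fin p) ℝ) (hΘ₁ : Θ₁.PosDef) (hΘ₂ : Θ₂.PosDef)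
    (hmin₁ : ∀ Θ : Matrix (Fin p) (Fin p) ℝ, Θ.PosDef → Φ Θ₁ ≤ Φ Θ)
    (hmin₂ : ∀ Θ : Matrix (Fin p) (Fin p) ℝ, Θ.PosDef → Φ Θ₂ ≤ Φ Θ) :
    Θ₁ = Θ₂ := by
  by_contra hne
  set M := (2⁻¹ : ℝ) • (Θ₁ + Θ₂) with hMdef
  have hM : M.PosDef := posDef_smul (hΘ₁.add hΘ₂) (by norm_num)
  have heq : Φ Θ₁ = Φ Θ₂ := le_antisymm (hmin₁ Θ₂ hΘ₂) (hmin₂ Θ₁ hΘ₁)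
  have hlog : 2⁻¹ * Real.log Θ₁.det + 2⁻¹ * Real.log Θ₂.det < Real.log M.det :=
    logdet_strict hΘ₁ hΘ₂ hne
  have htr : (S * M).trace = 2⁻¹ * (S * Θ₁).trace + 2⁻¹ * (S * Θ₂).trace := by
    rw [hMdef, Matrix.mul_smul, mul_add, Matrix.trace_smul, Matrix.trace_add]
    simp [smul_eq_mul]
    ring
  have hpen : ∑ i, ∑ j, (if i = j then 0 else |M i j|)
      ≤ 2⁻¹ * ∑ i, ∑ j, (if i = j then 0 else |Θ₁ i j|)
        + 2⁻¹ * ∑ i, ∑ j, (if i = j then 0 else |Θ₂ i j|) := by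
    rw [Finset.mul_sum, Finset.mul_sum, ← Finset.sum_add_distrib]
    apply Finset.sum_le_sum
    intro i _
    rw [Finset.mul_sum, Finset.mul_sum, ← Finset.sum_add_distrib]
    apply Finset.sum_le_sum
    intro j _
    by_cases h : i = j
    · simp [h]
    · simp only [if_neg h]
      have hMij : M i j = 2⁻¹ * Θ₁ i j + 2⁻¹ * Θ₂ i j := by
        rw [hMdef]
        simp [Matrix.add_apply, smul_eq_mul]
        ring
      rw [hMij]
      calc |2⁻¹ * Θ₁ i j + 2⁻¹ * Θ₂ i j| ≤ |2⁻¹ * Θ₁ i j| + |2⁻¹ * Θ₂ i j| := abs_add_le _ _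
        _ = 2⁻¹ * |Θ₁ i j| + 2⁻¹ * |Θ₂ i j| := by
            have habs : |(2⁻¹ : ℝ)| = 2⁻¹ := abs_of_pos (by norm_num)
            rw [abs_mul, abs_mul, habs]
  have hpen2 : lam * ∑ i, ∑ j, (if i = j then 0 else |M i j|)
      ≤ 2⁻¹ * (lam * ∑ i, ∑ j, (if i = j then 0 else |Θ₁ i j|))
        + 2⁻¹ * (lam * ∑ i, ∑ j, (if i = j then 0 else |Θ₂ i j|)) := by
    have h := mul_le_mul_of_nonneg_left hpen hlam
    calc lam * ∑ i, ∑ j, (if i = j then 0 else |M i j|)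
        ≤ lam * (2⁻¹ * ∑ i, ∑ j, (if i = j then 0 else |Θ₁ i j|)
          + 2⁻¹ * ∑ i, ∑ j, (if i = j then 0 else |Θ₂ i j|)) := h
      _ = 2⁻¹ * (lam * ∑ i, ∑ j, (if i = j then 0 else |Θ₁ i j|))
          + 2⁻¹ * (lam * ∑ i, ∑ j, (if i = j then 0 else |Θ₂ i j|)) := by ring
  have hkey : Φ M < 2⁻¹ * Φ Θ₁ + 2⁻¹ * Φ Θ₂ := by
    rw [hΦ M, hΦ Θ₁, hΦ Θ₂]
    have h1 := hlog
    have h2 := htr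
    have h3 := hpen2
    ring_nf at h1 h2 h3 ⊢
    linarith
  have h4 := hmin₁ M hM
  linarith [heq, hkey, h4]
end
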